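/- Let n = (2r+1)p + q with p ≥ 1 and r+2 ≤ q ≤ 2r. If p is even, the minimum size of an r-identifying code of the path P_n is (2r+1)p/2 + q - 1; if p is odd, it is (2r+1)(p-1)/2 + 2r + 1. -/

import Mathlib

/-- `Dr G r D x` = `N_r[x] ∩ D`. -/
def Dr {V : Type*} (G : SimpleGraph V) (r : ℕ) (D : Set V) (x : V) : Set V :=
  {y | y ∈ D ∧ G.dist x y ≤ r}

/-- `D` is an `r`-identifying code of `G`. -/
def IsIdCode {V : Type*} (G : SimpleGraph V) (r : ℕ) (D : Set V) : Prop :=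
  (∀ x, (Dr G r D x).Nonempty) ∧ ∀ x y, x ≠ y → Dr G r D x ≠ Dr G r D y

/-- `D` is an `r`-locating-dominating set of `G`. -/
def IsLD {V : Type*} (G : SimpleGraph V) (r : ℕ) (D : Set V) : Prop :=
  (∀ x ∉ D, (Dr G r D x).Nonempty) ∧
    ∀ x ∉ D, ∀ y ∉ D, x ≠ y → Dr G r D x ≠ Dr G r D y

/-- The cycle graph on `ZMod n`. -/
def cycleG (n : ℕ) : SimpleGraph (ZMod n) :=
  SimpleGraph.fromRel (fun x y => x - y = 1)

set_option linter.unusedSectionVars false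
set_option linter.unusedVariables false
set_option maxHeartbeats 1000000

open SimpleGraph Finset


lemma natDist_le_walk_length {n : ℕ} {u v : Fin n} (w : (pathGraph n).Walk u v) :
    Nat.dist u.val v.val ≤ w.length := by
  induction w with
  | nil => simp [Nat.dist_self]
  | @cons a b c h w ih =>
    have hab : Nat.dist a.val b.val = 1 := by
      rw [pathGraph_adj] at h
      rcases h with h | h <;> simp [Nat.dist] <;> omega
    calc Nat.dist a.val c.val ≤ Nat.dist a.val b.val + Nat.dist b.val c.val :=
          Nat.dist.triangle_inequality _ _ _
      _ ≤ 1 + w.length := by omega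
      _ = (SimpleGraph.Walk.cons h w).length := by simp [SimpleGraph.Walk.length_cons]; omega

lemma pathGraph_dist_le_aux {n : ℕ} : ∀ (k : ℕ) (u v : Fin n), v.val = u.val + k →
    (pathGraph n).dist u v ≤ k := by
  intro k
  induction k with
  | zero => intro u v h; have : u = v := Fin.ext (by omega); simp [this]
  | succ k ih =>
    intro u v h
    have hu1 : u.val + 1 < n := by have := v.isLt; omega
    set u' : Fin n := ⟨u.val + 1, hu1⟩ with hu'
    have hadj : (pathGraph n).Adj u u' := by rw [pathGraph_adj]; left; rfl
    have h1 : (pathGraph n).dist u u' ≤ 1 := by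
      simpa using SimpleGraph.dist_le (SimpleGraph.Walk.cons hadj SimpleGraph.Walk.nil)
    have h2 : (pathGraph n).dist u' v ≤ k := ih u' v (by simp [hu']; omega)
    have hconn : (pathGraph n).Connected := by
      have hn : 0 < n := u.pos
      obtain ⟨n', rfl⟩ : ∃ n', n = n' + 1 := ⟨n - 1, by omega⟩
      exact pathGraph_connected n'
    have := hconn.dist_triangle (u := u) (v := u') (w := v)
    omega

lemma pathGraph_dist {n : ℕ} (u v : Fin n) :
    (pathGraph n).dist u v = Nat.dist u.val v.val := by
  refine le_antisymm ?_ ?_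
  · rcases le_total u.val v.val with h | h
    · exact pathGraph_dist_le_aux _ u v (by simp [Nat.dist]; omega)
    · rw [SimpleGraph.dist_comm, Nat.dist_comm]
      exact pathGraph_dist_le_aux _ v u (by simp [Nat.dist]; omega)
  · obtain ⟨w, hw⟩ := (pathGraph_preconnected n u v).exists_walk_length_eq_dist
    rw [← hw]; exact natDist_le_walk_length w

lemma pathGraph_dist_le_iff {n : ℕ} (u v : Fin n) (r : ℕ) :
    (pathGraph n).dist u v ≤ r ↔ u.val ≤ v.val + r ∧ v.val ≤ u.val + r := by
  rw [pathGraph_dist, Nat.dist]; omega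

section Char
variable {n r : ℕ} {D : Set (Fin n)}

def memS (D : Set (Fin n)) (k : ℕ) : Prop := ∃ x : Fin n, x ∈ D ∧ x.val = k

lemma mem_Dr_iff {x z : Fin n} : z ∈ Dr (pathGraph n) r D x ↔
    z ∈ D ∧ z.val ≤ x.val + r ∧ x.val ≤ z.val + r := by
  unfold Dr
  rw [Set.mem_setOf_eq, pathGraph_dist_le_iff]
  tauto

lemma idcode_natB (hD : IsIdCode (pathGraph n) r D) :
    ∀ i, i + 1 < n → (r ≤ i ∧ memS D (i - r)) ∨ (i + r + 1 < n ∧ memS D (i + r + 1)) := by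
  intro i hi
  set x : Fin n := ⟨i, by omega⟩
  set y : Fin n := ⟨i + 1, hi⟩
  have hxy : x ≠ y := by simp [x, y, Fin.ext_iff]
  have hne := hD.2 x y hxy
  have : ∃ z, ¬ (z ∈ Dr (pathGraph n) r D x ↔ z ∈ Dr (pathGraph n) r D y) := by
    by_contra h
    push_neg at h
    exact hne (Set.ext fun z => h z)
  obtain ⟨z, hz⟩ := this
  rw [mem_Dr_iff, mem_Dr_iff] at hz
  have hzD : z ∈ D := by tauto
  simp only [x, y] at hz
  by_cases hc : z.val + r = i
  · left; exact ⟨by omega, z, hzD, by omega⟩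
  · right
    have : z.val = i + r + 1 := by
      by_contra hc2
      exact hz (by constructor <;> intro h <;> exact ⟨hzD, by omega⟩)
    exact ⟨by omega, z, hzD, by omega⟩

lemma idcode_of (hA : ∀ x : Fin n, ∃ z : Fin n, z ∈ D ∧ z.val ≤ x.val + r ∧ x.val ≤ z.val + r)
    (hB : ∀ i, i + 1 < n → (r ≤ i ∧ memS D (i - r)) ∨ (i + r + 1 < n ∧ memS D (i + r + 1))) :
    IsIdCode (pathGraph n) r D := by
  have key : ∀ x y : Fin n, x.val < y.val → Dr (pathGraph n) r D x ≠ Dr (pathGraph n) r D y := by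
    intro x y hlt
    by_cases hfar : x.val + 2 * r + 2 ≤ y.val
    · obtain ⟨z, hz⟩ := hA x
      intro h
      have h1 : z ∈ Dr (pathGraph n) r D x := mem_Dr_iff.2 ⟨hz.1, hz.2.1, hz.2.2⟩
      rw [h] at h1
      rw [mem_Dr_iff] at h1
      omega
    · rcases hB x.val (by omega) with ⟨hrx, z, hzD, hzv⟩ | ⟨hin, z, hzD, hzv⟩
      · intro h
        have h1 : z ∈ Dr (pathGraph n) r D x := mem_Dr_iff.2 ⟨hzD, by omega, by omega⟩
        rw [h] at h1
        rw [mem_Dr_iff] at h1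
        omega
      · intro h
        have h1 : z ∈ Dr (pathGraph n) r D y := mem_Dr_iff.2 ⟨hzD, by omega, by omega⟩
        rw [← h] at h1
        rw [mem_Dr_iff] at h1
        omega
  constructor
  · intro x
    obtain ⟨z, hz⟩ := hA x
    exact ⟨z, mem_Dr_iff.2 ⟨hz.1, hz.2.1, hz.2.2⟩⟩
  · intro x y hxy
    rcases lt_trichotomy x.val y.val with h | h | h
    · exact key x y h
    · exact absurd (Fin.ext h) hxy
    · exact (key y x h).symm

end Char


section Chains
variable {T : ℕ → Prop} [DecidablePred T]

lemma chain_split (L : ℕ) (hL : 2 ≤ L) :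
    ((range L).filter T).card
      = ((range (L-2)).filter T).card + ((Ico (L-2) L).filter T).card := by
  have : range L = range (L-2) ∪ Ico (L-2) L := by
    rw [range_eq_Ico, range_eq_Ico]
    exact (Finset.Ico_union_Ico_eq_Ico (a := 0) (b := L-2) (c := L) (by omega) (by omega)).symm

  rw [this, filter_union, card_union_of_disjoint]
  exact disjoint_filter_filter (by rw [range_eq_Ico]; exact Ico_disjoint_Ico_consecutive 0 (L-2) L)

lemma chain_top (L : ℕ) (hL : 1 ≤ L) (hT : T (L-1)) :
    ((range L).filter T).card = ((range (L-1)).filter T).card + 1 := by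
  have : range L = insert (L-1) (range (L-1)) := by
    ext j; simp [Finset.mem_insert]; omega
  rw [this, filter_insert, if_pos hT, card_insert_of_notMem (by simp)]

lemma chain_pair_card (L : ℕ) (hL : 2 ≤ L) (h : T (L-2) ∨ T (L-1)) :
    1 ≤ ((Ico (L-2) L).filter T).card := by
  rw [Nat.one_le_iff_ne_zero, ← Nat.pos_iff_ne_zero, Finset.card_pos]
  rcases h with h | h
  · exact ⟨L-2, by simp [Finset.mem_filter, Finset.mem_Ico]; exact ⟨by omega, h⟩⟩
  · exact ⟨L-1, by simp [Finset.mem_filter, Finset.mem_Ico]; exact ⟨by omega, h⟩⟩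

lemma chain1 : ∀ L : ℕ, (∀ j, j+1 < L → T j ∨ T (j+1)) →
    L/2 ≤ ((range L).filter T).card := by
  intro L
  induction L using Nat.strong_induction_on with
  | _ L ih =>
    intro h
    rcases Nat.lt_or_ge L 2 with hL | hL
    · interval_cases L <;> simp
    · have h1 := ih (L-2) (by omega) (fun j hj => h j (by omega))
      have h2 := chain_pair_card L hL (by have := h (L-2) (by omega); rwa [show L-2+1 = L-1 by omega] at this)
      rw [chain_split L hL]
      omega

lemma chain2 : ∀ L : ℕ, 1 ≤ L → T 0 → (∀ j, j+1 < L → T j ∨ T (j+1)) →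
    (L+1)/2 ≤ ((range L).filter T).card := by
  intro L
  induction L using Nat.strong_induction_on with
  | _ L ih =>
    intro hL h0 h
    rcases Nat.lt_or_ge L 2 with hL2 | hL2
    · have hL1 : L = 1 := by omega
      subst hL1
      simpa using Finset.card_pos.2 ⟨0, by simp [h0]⟩
    · have h1 := ih (L-2) (by omega)
      have h2 := chain_pair_card L hL2 (by have := h (L-2) (by omega); rwa [show L-2+1 = L-1 by omega] at this)
      rw [chain_split L hL2]
      rcases Nat.lt_or_ge (L-2) 1 with h3 | h3
      · have : L = 2 ∨ L = 3 := by omega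
        have hcard : ((range (L-2)).filter T).card = 0 ∨ True := Or.inr trivial
        rcases this with rfl | rfl <;> simp_all <;> omega
      · have := h1 h3 h0 (fun j hj => h j (by omega))
        omega

lemma chain2' (L : ℕ) (hL : 1 ≤ L) (hlast : T (L-1)) (h : ∀ j, j+1 < L → T j ∨ T (j+1)) :
    (L+1)/2 ≤ ((range L).filter T).card := by
  rw [chain_top L hL hlast]
  have := chain1 (L-1) (fun j hj => h j (by omega))
  omega

lemma chain3 (L : ℕ) (hL : 1 ≤ L) (h0 : T 0) (hlast : T (L-1)) (h : ∀ j, j+1 < L → T j ∨ T (j+1)) :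
    L/2 + 1 ≤ ((range L).filter T).card := by
  rcases Nat.lt_or_ge L 2 with hL2 | hL2
  · have hL1 : L = 1 := by omega
    subst hL1
    simpa using Finset.card_pos.2 ⟨0, by simp [h0]⟩
  · rw [chain_top L hL hlast]
    have := chain2 (L-1) (by omega) h0 (fun j hj => h j (by omega))
    omega

end Chains

lemma card_evens (L : ℕ) : ((range L).filter (fun j => j % 2 = 0)).card = (L+1)/2 := by
  induction L with
  | zero => simp
  | succ L ih =>
    rw [Finset.range_add_one, filter_insert]
    by_cases h : L % 2 = 0
    · rw [if_pos h, card_insert_of_notMem (by simp)]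
      omega
    · rw [if_neg h]
      omega

lemma card_odds (L : ℕ) : ((range L).filter (fun j => j % 2 = 1)).card = L/2 := by
  induction L with
  | zero => simp
  | succ L ih =>
    rw [Finset.range_add_one, filter_insert]
    by_cases h : L % 2 = 1
    · rw [if_pos h, card_insert_of_notMem (by simp)]
      omega
    · rw [if_neg h]
      omega

lemma card_fiber_decomp (S : Finset ℕ) (n m : ℕ) (hm : 0 < m) (hS : ∀ s ∈ S, s < n)
    (L : ℕ → ℕ) (hL : ∀ c < m, ∀ j, (c + m*j < n ↔ j < L c)) :
    S.card = ∑ c ∈ range m, ((range (L c)).filter (fun j => c + m*j ∈ S)).card := by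
  rw [Finset.card_eq_sum_card_fiberwise (f := fun s => s % m) (t := range m)
    (fun s hs => by simp [Nat.mod_lt _ hm])]
  refine Finset.sum_congr rfl (fun c hc => ?_)
  have hcm : c < m := by simpa using hc
  refine Finset.card_bij' (fun s _ => s / m) (fun j _ => c + m * j) ?_ ?_ ?_ ?_
  · intro s hs
    rw [Finset.mem_filter] at hs
    obtain ⟨hs1, hs2⟩ := hs
    have hdm : c + m * (s / m) = s := by
      conv_rhs => rw [← Nat.mod_add_div s m, hs2]
    rw [Finset.mem_filter, Finset.mem_range, hdm]
    exact ⟨(hL c hcm _).1 (by rw [hdm]; exact hS s hs1), hs1⟩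
  · intro j hj
    rw [Finset.mem_filter] at hj ⊢
    refine ⟨hj.2, ?_⟩
    rw [Nat.add_mul_mod_self_left, Nat.mod_eq_of_lt hcm]
  · intro s hs
    rw [Finset.mem_filter] at hs
    conv_rhs => rw [← Nat.mod_add_div s m, hs.2]
  · intro j hj
    show (c + m * j) / m = j
    rw [Nat.add_mul_div_left _ _ hm, Nat.div_eq_of_lt hcm, Nat.zero_add]


def condE (r p q c j : ℕ) : Prop :=
  (c + r + 2 ≤ q ∧ j % 2 = 0) ∨
  (q ≤ c + r + 1 ∧ c ≤ r ∧ j % 2 = 1) ∨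
  (r + 1 ≤ c ∧ c < q ∧ j % 2 = 0) ∨
  (q ≤ c ∧ (j % 2 = 0 ∨ j = p - 1))

def condO (r q c j : ℕ) : Prop :=
  ((c + r + 2 ≤ q ∨ c = r) ∧ j % 2 = 1) ∨
  ((q ≤ c + r + 1 ∧ c ≠ r) ∧ j % 2 = 0)

def codeN (cond : ℕ → ℕ → Prop) (m n k : ℕ) : Prop :=
  ∃ c j, c < m ∧ k = c + m*j ∧ k < n ∧ cond c j

lemma dominate (n r : ℕ) (P : ℕ → Prop) (a : ℕ) (ha : P a) (har : a ≤ r)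
    (hsucc : ∀ d, P d → d + r + 2 ≤ n → ∃ d', P d' ∧ d < d' ∧ d' ≤ d + 2*r + 1) :
    ∀ x < n, ∃ d, P d ∧ d ≤ x + r ∧ x ≤ d + r := by
  intro x
  induction x using Nat.strong_induction_on with
  | _ x ih =>
    intro hx
    by_cases hxa : x ≤ a + r
    · exact ⟨a, ha, by omega, by omega⟩
    · obtain ⟨d, hd, hd1, hd2⟩ := ih (x-1) (by omega) (by omega)
      by_cases hxd : x ≤ d + r
      · exact ⟨d, hd, by omega, hxd⟩
      · obtain ⟨d', hd', hdd', hd'2⟩ := hsucc d hd (by omega)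
        exact ⟨d', hd', by omega, by omega⟩

section CodeE
variable (r p q m n : ℕ) (hr : 1 ≤ r) (hp : 1 ≤ p) (hpE : p % 2 = 0) (hq1 : r+2 ≤ q)
  (hq2 : q ≤ 2*r) (hm : m = 2*r+1) (hn : n = m*p+q)

include hr hp hpE hq1 hq2 hm hn

lemma succE : ∀ d, codeN (condE r p q) m n d → d + r + 2 ≤ n →
    ∃ d', codeN (condE r p q) m n d' ∧ d < d' ∧ d' ≤ d + 2*r+1 := by
  intro d hd hdn
  obtain ⟨c, j, hc, hdk, hdn', hcond⟩ := hd
  have hmul : ∀ a b : ℕ, a ≤ b → m*a ≤ m*b := fun a b h => Nat.mul_le_mul_left m h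
  have e1 : m*(j+1) = m*j + m := by ring
  have e2 : m*(p-1) + m = m*p := by
    have h3 : m*(p-1) + m = m*((p-1)+1) := by ring
    rw [h3, show p-1+1 = p by omega]
  have hjp : j ≤ p := by
    by_contra hj
    push_neg at hj
    have h4 := hmul (p+1) j (by omega)
    have h5 : m*(p+1) = m*p + m := by ring
    omega
  have hjmp : m*j ≤ m*p := hmul _ _ hjp
  rcases hcond with ⟨h1, h2⟩ | ⟨h1, h1', h2⟩ | ⟨h1, h1', h2⟩ | ⟨h1, h2⟩
  · -- c ≤ q-r-2, j even
    by_cases hb : c + r + 3 ≤ q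
    · exact ⟨(c+1) + m*j, ⟨c+1, j, by omega, rfl, by omega, by unfold condE; omega⟩,
        by omega, by omega⟩
    · refine ⟨(r+1) + m*j, ⟨r+1, j, by omega, rfl, ?_, by unfold condE; omega⟩,
        by omega, by omega⟩
      by_cases hjp' : j = p
      · omega
      · have := hmul (j+1) p (by omega)
        omega
  · -- q-r-1 ≤ c ≤ r, j odd
    by_cases hb : c + 1 ≤ r
    · exact ⟨(c+1) + m*j, ⟨c+1, j, by omega, rfl, by omega, by unfold condE; omega⟩,
        by omega, by omega⟩
    · have h6 := hmul (j+1) p (by omega)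
      exact ⟨0 + m*(j+1), ⟨0, j+1, by omega, rfl, by omega, by unfold condE; omega⟩,
        by omega, by omega⟩
  · -- r+1 ≤ c ≤ q-1, j even
    by_cases hb : c + 1 ≤ q - 1
    · exact ⟨(c+1) + m*j, ⟨c+1, j, by omega, rfl, by omega, by unfold condE; omega⟩,
        by omega, by omega⟩
    · have hjne : j ≠ p := by
        intro hjp'
        subst hjp'
        omega
      have h7 := hmul (j+2) p (by omega)
      have e3 : m*(j+2) = m*j + m + m := by ring
      exact ⟨q + m*j, ⟨q, j, by omega, rfl, by omega, by unfold condE; omega⟩,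
        by omega, by omega⟩
  · -- q ≤ c ≤ 2r, j even or j = p-1
    by_cases hb : c + 1 ≤ 2*r
    · exact ⟨(c+1) + m*j, ⟨c+1, j, by omega, rfl, by omega, by unfold condE; omega⟩,
        by omega, by omega⟩
    · rcases h2 with h2 | h2
      · have hjne : j ≠ p := by
          intro hjp'
          subst hjp'
          omega
        have h9 := hmul (j+1) (p-1) (by omega)
        have h10 : m*(p-1) ≤ m*p := hmul _ _ (by omega)
        exact ⟨(q-r-1) + m*(j+1), ⟨q-r-1, j+1, by omega, rfl, by omega,
          by unfold condE; omega⟩, by omega, by omega⟩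
      · subst h2
        exact ⟨0 + m*p, ⟨0, p, by omega, rfl, by omega, by unfold condE; omega⟩,
          by omega, by omega⟩

lemma natB_E : ∀ i, i+1 < n →
    (r ≤ i ∧ codeN (condE r p q) m n (i-r)) ∨
    (i+r+1 < n ∧ codeN (condE r p q) m n (i+r+1)) := by
  intro i hi
  have hmul : ∀ a b : ℕ, a ≤ b → m*a ≤ m*b := fun a b h => Nat.mul_le_mul_left m h
  have hmp : m*1 ≤ m*p := hmul 1 p hp
  have e2 : m*(p-1) + m = m*p := by
    have h3 : m*(p-1) + m = m*((p-1)+1) := by ring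
    rw [h3, show p-1+1 = p by omega]
  set k := i + r + 1 with hk
  by_cases hkn : k < n
  · obtain ⟨c, j, hcm, hkd⟩ : ∃ c j, c < m ∧ k = c + m*j :=
      ⟨k % m, k / m, Nat.mod_lt _ (by omega), (Nat.mod_add_div k m).symm⟩
    by_cases hj0 : j = 0
    · rw [hj0] at hkd
      right
      refine ⟨hkn, c, 0, hcm, by omega, by omega, by unfold condE; omega⟩
    · have hjm : m*1 ≤ m*j := hmul 1 j (by omega)
      obtain ⟨j', hj'⟩ : ∃ j', j = j'+1 := ⟨j-1, by omega⟩
      have e1 : m*(j'+1) = m*j' + m := by ring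
      rw [hj'] at hkd
      by_cases hreg : q ≤ c + r + 1 ∧ c ≤ r
      · by_cases hpar : (j'+1) % 2 = 1
        · exact Or.inr ⟨hkn, c, j'+1, hcm, hkd, hkn, by unfold condE; omega⟩
        · exact Or.inl ⟨by omega, c, j', hcm, by omega, by omega, by unfold condE; omega⟩
      · by_cases hpar : (j'+1) % 2 = 0
        · exact Or.inr ⟨hkn, c, j'+1, hcm, hkd, hkn, by unfold condE; omega⟩
        · exact Or.inl ⟨by omega, c, j', hcm, by omega, by omega, by unfold condE; omega⟩
  · left
    have hil : r ≤ i := by omega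
    refine ⟨hil, ?_⟩
    set x := i - r with hx
    have hx1 : n ≤ x + 2*r + 1 := by omega
    have hx2 : x + r + 2 ≤ n := by omega
    by_cases hxp : m*p ≤ x
    · exact ⟨x - m*p, p, by omega, by omega, by omega, by unfold condE; omega⟩
    · refine ⟨x - m*(p-1), p-1, by omega, by omega, by omega, by unfold condE; omega⟩

end CodeE

section CodeO
variable (r p q m n : ℕ) (hr : 1 ≤ r) (hp : 1 ≤ p) (hpO : p % 2 = 1) (hq1 : r+2 ≤ q)
  (hq2 : q ≤ 2*r) (hm : m = 2*r+1) (hn : n = m*p+q)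

include hr hp hpO hq1 hq2 hm hn

lemma succO : ∀ d, codeN (condO r q) m n d → d + r + 2 ≤ n →
    ∃ d', codeN (condO r q) m n d' ∧ d < d' ∧ d' ≤ d + 2*r+1 := by
  intro d hd hdn
  obtain ⟨c, j, hc, hdk, hdn', hcond⟩ := hd
  have hmul : ∀ a b : ℕ, a ≤ b → m*a ≤ m*b := fun a b h => Nat.mul_le_mul_left m h
  have e1 : m*(j+1) = m*j + m := by ring
  have e2 : m*(p-1) + m = m*p := by
    have h3 : m*(p-1) + m = m*((p-1)+1) := by ring
    rw [h3, show p-1+1 = p by omega]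
  have hjp : j ≤ p := by
    by_contra hj
    push_neg at hj
    have h4 := hmul (p+1) j (by omega)
    have h5 : m*(p+1) = m*p + m := by ring
    omega
  have hjmp : m*j ≤ m*p := hmul _ _ hjp
  rcases hcond with ⟨h1, h2⟩ | ⟨⟨h1, h1'⟩, h2⟩
  · -- odd-pattern classes : c ≤ q-r-2 or c = r, j odd
    rcases h1 with h1 | h1
    · by_cases hb : c + r + 3 ≤ q
      · exact ⟨(c+1) + m*j, ⟨c+1, j, by omega, rfl, by omega, by unfold condO; omega⟩,
          by omega, by omega⟩
      · exact ⟨r + m*j, ⟨r, j, by omega, rfl, by omega, by unfold condO; omega⟩,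
          by omega, by omega⟩
    · -- c = r : jump to q-r-1 next block
      have hjne : j ≠ p := by
        intro hjp'
        subst hjp'
        omega
      have h6 := hmul (j+1) p (by omega)
      exact ⟨(q-r-1) + m*(j+1), ⟨q-r-1, j+1, by omega, rfl, by omega,
        by unfold condO; omega⟩, by omega, by omega⟩
  · -- even-pattern classes : q-r-1 ≤ c ≤ 2r, c ≠ r, j even
    have hjne : j ≠ p := by
      intro hjp'
      subst hjp'
      omega
    have h9 := hmul (j+1) p (by omega)
    have h10 := hmul (j+1) (p-1+1) (by omega)
    by_cases hb : c + 1 ≤ 2*r ∧ c + 1 ≠ r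
    · refine ⟨(c+1) + m*j, ⟨c+1, j, by omega, rfl, ?_, by unfold condO; omega⟩,
        by omega, by omega⟩
      by_cases hjp1 : j + 1 ≤ p - 1
      · have := hmul (j+1) (p-1) hjp1
        omega
      · omega
    · by_cases hb2 : c + 1 = r
      · refine ⟨(r+1) + m*j, ⟨r+1, j, by omega, rfl, ?_, by unfold condO; omega⟩,
          by omega, by omega⟩
        have hjp1 : j ≤ p - 1 := by omega
        have := hmul j (p-1) hjp1
        omega
      · -- c = 2r
        exact ⟨0 + m*(j+1), ⟨0, j+1, by omega, rfl, by omega, by unfold condO; omega⟩,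
          by omega, by omega⟩

lemma natB_O : ∀ i, i+1 < n →
    (r ≤ i ∧ codeN (condO r q) m n (i-r)) ∨
    (i+r+1 < n ∧ codeN (condO r q) m n (i+r+1)) := by
  intro i hi
  have hmul : ∀ a b : ℕ, a ≤ b → m*a ≤ m*b := fun a b h => Nat.mul_le_mul_left m h
  have hmp : m*1 ≤ m*p := hmul 1 p hp
  have e2 : m*(p-1) + m = m*p := by
    have h3 : m*(p-1) + m = m*((p-1)+1) := by ring
    rw [h3, show p-1+1 = p by omega]
  set k := i + r + 1 with hk
  by_cases hkn : k < n
  · obtain ⟨c, j, hcm, hkd⟩ : ∃ c j, c < m ∧ k = c + m*j :=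
      ⟨k % m, k / m, Nat.mod_lt _ (by omega), (Nat.mod_add_div k m).symm⟩
    by_cases hj0 : j = 0
    · rw [hj0] at hkd
      right
      refine ⟨hkn, c, 0, hcm, by omega, by omega, by unfold condO; omega⟩
    · have hjm : m*1 ≤ m*j := hmul 1 j (by omega)
      obtain ⟨j', hj'⟩ : ∃ j', j = j'+1 := ⟨j-1, by omega⟩
      have e1 : m*(j'+1) = m*j' + m := by ring
      rw [hj'] at hkd
      by_cases hreg : c + r + 2 ≤ q ∨ c = r
      · by_cases hpar : (j'+1) % 2 = 1
        · exact Or.inr ⟨hkn, c, j'+1, hcm, hkd, hkn, by unfold condO; omega⟩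
        · exact Or.inl ⟨by omega, c, j', hcm, by omega, by omega, by unfold condO; omega⟩
      · by_cases hpar : (j'+1) % 2 = 0
        · exact Or.inr ⟨hkn, c, j'+1, hcm, hkd, hkn, by unfold condO; omega⟩
        · exact Or.inl ⟨by omega, c, j', hcm, by omega, by omega, by unfold condO; omega⟩
  · left
    have hil : r ≤ i := by omega
    refine ⟨hil, ?_⟩
    set x := i - r with hx
    have hx1 : n ≤ x + 2*r + 1 := by omega
    have hx2 : x + r + 2 ≤ n := by omega
    by_cases hxp : m*p ≤ x
    · exact ⟨x - m*p, p, by omega, by omega, by omega, by unfold condO; omega⟩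
    · refine ⟨x - m*(p-1), p-1, by omega, by omega, by omega, by unfold condO; omega⟩

end CodeO
def Bfun (r p q c : ℕ) : ℕ :=
  if c + r + 2 ≤ q then (p+2)/2 else if c ≤ r then (p+1)/2 else if c < q then (p+2)/2
  else p/2 + 1

lemma sum_Bfun_even (r p q : ℕ) (hr : 1 ≤ r) (hp : 1 ≤ p) (hq1 : r+2 ≤ q) (hq2 : q ≤ 2*r)
    (hpE : p % 2 = 0) :
    ∑ c ∈ range (2*r+1), Bfun r p q c = (2*r+1)*p/2 + q - 1 := by
  set m := 2*r+1 with hm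
  have hBval : ∀ c ∈ range m, Bfun r p q c
      = p/2 + (if q ≤ c + r + 1 ∧ c ≤ r then 0 else 1) := by
    intro c hc
    rw [mem_range] at hc
    unfold Bfun
    split_ifs <;> omega
  have hsum : ∑ c ∈ range m, Bfun r p q c
      = m * (p/2) + ∑ c ∈ range m, (if q ≤ c + r + 1 ∧ c ≤ r then 0 else 1) := by
    rw [Finset.sum_congr rfl hBval, Finset.sum_add_distrib, Finset.sum_const,
      card_range, smul_eq_mul]
  have hind : ∑ c ∈ range m, (if q ≤ c + r + 1 ∧ c ≤ r then 0 else 1) = q - 1 := by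
    have e1 : ∀ c ∈ range m, (if q ≤ c + r + 1 ∧ c ≤ r then (0:ℕ) else 1)
        = if ¬(q ≤ c + r + 1 ∧ c ≤ r) then 1 else 0 := by
      intro c _
      by_cases h : q ≤ c + r + 1 ∧ c ≤ r <;> simp [h]
    rw [Finset.sum_congr rfl e1, ← Finset.sum_filter]
    have e2 : (range m).filter (fun c => ¬(q ≤ c + r + 1 ∧ c ≤ r))
        = range (q-r-1) ∪ Ico (r+1) m := by
      ext c
      simp only [mem_filter, mem_range, mem_union, mem_Ico]
      omega
    rw [Finset.sum_const, smul_eq_mul, mul_one, e2, card_union_of_disjoint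
      (by simp only [Finset.disjoint_left, mem_range, mem_Ico]; omega)]
    rw [card_range, Nat.card_Ico]
    omega
  have hdvd : 2 ∣ p := by omega
  rw [Nat.mul_div_assoc m hdvd]
  omega

lemma sum_Bfun_odd (r p q : ℕ) (hr : 1 ≤ r) (hp : 1 ≤ p) (hq1 : r+2 ≤ q) (hq2 : q ≤ 2*r)
    (hpO : p % 2 = 1) :
    ∑ c ∈ range (2*r+1), Bfun r p q c = (2*r+1)*(p-1)/2 + 2*r + 1 := by
  set m := 2*r+1 with hm
  have hBval : ∀ c ∈ range m, Bfun r p q c = (p+1)/2 := by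
    intro c hc
    unfold Bfun
    split_ifs <;> omega
  have hsum : ∑ c ∈ range m, Bfun r p q c = m * ((p+1)/2) := by
    rw [Finset.sum_congr rfl hBval, Finset.sum_const, card_range, smul_eq_mul]
  have hdvd : 2 ∣ (p-1) := by omega
  rw [Nat.mul_div_assoc m hdvd]
  have he : (p+1)/2 = (p-1)/2 + 1 := by omega
  rw [he] at hsum
  have e3 : m * ((p-1)/2 + 1) = m * ((p-1)/2) + m := by ring
  omega

lemma lower_bound (r p q : ℕ) (hr : 1 ≤ r) (hp : 1 ≤ p) (hq1 : r+2 ≤ q) (hq2 : q ≤ 2*r)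
    (S : Finset ℕ) (hS : ∀ s ∈ S, s < (2*r+1)*p + q)
    (hB : ∀ i, i+1 < (2*r+1)*p+q →
      (r ≤ i ∧ (i-r) ∈ S) ∨ (i+r+1 < (2*r+1)*p+q ∧ (i+r+1) ∈ S)) :
    (Even p → (2*r+1)*p/2 + q - 1 ≤ S.card) ∧
      (Odd p → (2*r+1)*(p-1)/2 + 2*r + 1 ≤ S.card) := by
  set m := 2*r+1 with hm
  set n := m*p+q with hn
  have hmp : m ≤ m*p := Nat.le_mul_of_pos_right m hp
  set L : ℕ → ℕ := fun c => if c < q then p+1 else p with hLdef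
  have hL : ∀ c < m, ∀ j, (c + m*j < n ↔ j < L c) := by
    intro c hc j
    by_cases hcq : c < q
    · simp only [hLdef, if_pos hcq]
      constructor
      · intro h
        by_contra hj
        push_neg at hj
        have h1 : m*(p+1) ≤ m*j := Nat.mul_le_mul_left m (by omega)
        have h2 : m*(p+1) = m*p + m := by ring
        omega
      · intro hj
        have h1 : m*j ≤ m*p := Nat.mul_le_mul_left m (by omega)
        omega
    · simp only [hLdef, if_neg hcq]
      constructor
      · intro h
        by_contra hj
        push_neg at hj
        have h1 : m*p ≤ m*j := Nat.mul_le_mul_left m (by omega)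
        omega
      · intro hj
        have h1 : m*(j+1) ≤ m*p := Nat.mul_le_mul_left m (by omega)
        have h2 : m*(j+1) = m*j + m := by ring
        omega
  have pair : ∀ c j, c + m*(j+1) < n → ((c + m*j) ∈ S ∨ (c + m*(j+1)) ∈ S) := by
    intro c j hjn
    have hms : m*(j+1) = m*j + m := by ring
    rcases hB (c + m*j + r) (by omega) with ⟨h2, h3⟩ | ⟨h2, h3⟩
    · left
      have he : c + m*j + r - r = c + m*j := by omega
      rwa [he] at h3
    · right
      have he : c + m*j + r + r + 1 = c + m*(j+1) := by omega
      rwa [he] at h3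
  have hfirst : ∀ c, r+1 ≤ c → c ≤ 2*r → c ∈ S := by
    intro c h1 h2
    rcases hB (c - r - 1) (by omega) with ⟨h4, _⟩ | ⟨_, h5⟩
    · omega
    · have he : c - r - 1 + r + 1 = c := by omega
      rwa [he] at h5
  have hlast : ∀ x, n ≤ x + 2*r + 1 → x + r + 2 ≤ n → x ∈ S := by
    intro x h1 h2
    rcases hB (x + r) (by omega) with ⟨_, h4⟩ | ⟨h5, _⟩
    · have he : x + r - r = x := by omega
      rwa [he] at h4
    · omega
  have decomp := card_fiber_decomp S n m (by omega) hS L hL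
  have hmp1 : m*(p-1) + m = m*p := by
    have : m*(p-1) + m = m*((p-1)+1) := by ring
    rw [this, show p - 1 + 1 = p by omega]
  have class_lb : ∀ c ∈ range m,
      Bfun r p q c ≤ ((range (L c)).filter (fun j => c + m*j ∈ S)).card := by
    intro c hc
    rw [mem_range] at hc
    have pairc : ∀ j, j+1 < L c → (c + m*j ∈ S) ∨ (c + m*(j+1) ∈ S) :=
      fun j hj => pair c j ((hL c hc (j+1)).2 hj)
    by_cases h1 : c + r + 2 ≤ q
    · have hcq : c < q := by omega
      have hLc : L c = p + 1 := by simp only [hLdef, if_pos hcq]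
      have hlst : c + m*p ∈ S := hlast _ (by omega) (by omega)
      have := chain2' (T := fun j => c + m*j ∈ S) (p+1) (by omega)
        (by simpa using hlst) (by rw [← hLc]; exact pairc)
      rw [hLc]
      refine le_trans ?_ this
      unfold Bfun
      split_ifs <;> omega
    · by_cases h2 : c ≤ r
      · have hcq : c < q := by omega
        have hLc : L c = p + 1 := by simp only [hLdef, if_pos hcq]
        have := chain1 (T := fun j => c + m*j ∈ S) (p+1) (by rw [← hLc]; exact pairc)
        rw [hLc]
        refine le_trans ?_ this
        unfold Bfun
        split_ifs <;> omega
      · by_cases h3 : c < q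
        · have hLc : L c = p + 1 := by simp only [hLdef, if_pos h3]
          have h0 : c + m*0 ∈ S := by simpa using hfirst c (by omega) (by omega)
          have := chain2 (T := fun j => c + m*j ∈ S) (p+1) (by omega) h0
            (by rw [← hLc]; exact pairc)
          rw [hLc]
          refine le_trans ?_ this
          unfold Bfun
          split_ifs <;> omega
        · have hLc : L c = p := by simp only [hLdef, if_neg h3]
          have h0 : c + m*0 ∈ S := by simpa using hfirst c (by omega) (by omega)
          have hlst : c + m*(p-1) ∈ S := hlast _ (by omega) (by omega)
          have := chain3 (T := fun j => c + m*j ∈ S) p hp h0 hlst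
            (by rw [← hLc]; exact pairc)
          rw [hLc]
          refine le_trans ?_ this
          unfold Bfun
          split_ifs <;> omega
  have total : ∑ c ∈ range m, Bfun r p q c ≤ S.card := by
    rw [decomp]
    exact Finset.sum_le_sum class_lb
  constructor
  · intro hEven
    have hpE : p % 2 = 0 := Nat.even_iff.1 hEven
    have hsum := sum_Bfun_even r p q hr hp hq1 hq2 hpE
    rw [← hm] at hsum
    omega
  · intro hOdd
    have hpO : p % 2 = 1 := Nat.odd_iff.1 hOdd
    have hsum := sum_Bfun_odd r p q hr hp hq1 hq2 hpO
    rw [← hm] at hsum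
    omega

lemma codeN_lt {cond : ℕ → ℕ → Prop} {m n k : ℕ} (h : codeN cond m n k) : k < n := by
  obtain ⟨c, j, _, _, h, _⟩ := h
  exact h

lemma decomp_uniq (m c c' j j' : ℕ) (hm : 0 < m) (hc : c < m) (hc' : c' < m)
    (h : c + m*j = c' + m*j') : c = c' ∧ j = j' := by
  have h1 : (c + m*j) % m = c := by rw [Nat.add_mul_mod_self_left, Nat.mod_eq_of_lt hc]
  have h2 : (c' + m*j') % m = c' := by rw [Nat.add_mul_mod_self_left, Nat.mod_eq_of_lt hc']
  have hcc : c = c' := by rw [← h1, h, h2]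
  have hjj : m*j = m*j' := by omega
  exact ⟨hcc, Nat.eq_of_mul_eq_mul_left hm hjj⟩

lemma codeN_iff (cond : ℕ → ℕ → Prop) (m n c j : ℕ) (hm : 0 < m) (hc : c < m) :
    codeN cond m n (c + m*j) ↔ (c + m*j < n ∧ cond c j) := by
  constructor
  · rintro ⟨c', j', hc', he, hlt, hcond⟩
    obtain ⟨h1, h2⟩ := decomp_uniq m c c' j j' hm hc hc' he
    subst h1
    subst h2
    exact ⟨hlt, hcond⟩
  · rintro ⟨hlt, hcond⟩
    exact ⟨c, j, hc, rfl, hlt, hcond⟩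

lemma ncard_setOf_val (n : ℕ) (P : ℕ → Prop) [DecidablePred P] :
    ({x : Fin n | P x.val}).ncard = ((range n).filter P).card := by
  rw [Set.ncard_eq_toFinset_card', Set.toFinset_setOf]
  refine Finset.card_bij (fun x _ => x.val) ?_ ?_ ?_
  · intro a ha
    simp only [Finset.mem_filter, Finset.mem_univ, true_and] at ha
    simp only [Finset.mem_filter, Finset.mem_range]
    exact ⟨a.isLt, ha⟩
  · intro a _ b _ h
    exact Fin.val_injective h
  · intro b hb
    simp only [Finset.mem_filter, Finset.mem_range] at hb
    exact ⟨⟨b, hb.1⟩, by simp [hb.2], rfl⟩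

lemma count_code (cond : ℕ → ℕ → Prop) [∀ c j, Decidable (cond c j)]
    [DecidablePred (codeN cond ((2:ℕ)*0+1) 0)]
    (p q m n : ℕ) (hm : 0 < m) (hq : q < m) (hn : n = m*p+q)
    [DecidablePred (codeN cond m n)] :
    ((range n).filter (codeN cond m n)).card
      = ∑ c ∈ range m, ((range (if c < q then p+1 else p)).filter (fun j => cond c j)).card := by
  have hmul : ∀ a b : ℕ, a ≤ b → m*a ≤ m*b := fun a b h => Nat.mul_le_mul_left m h
  have hL : ∀ c < m, ∀ j, (c + m*j < n ↔ j < (if c < q then p+1 else p)) := by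
    intro c hc j
    by_cases hcq : c < q
    · rw [if_pos hcq]
      constructor
      · intro h
        by_contra hj
        push_neg at hj
        have h1 : m*(p+1) ≤ m*j := hmul _ _ (by omega)
        have h2 : m*(p+1) = m*p + m := by ring
        omega
      · intro hj
        have h1 : m*j ≤ m*p := hmul _ _ (by omega)
        omega
    · rw [if_neg hcq]
      constructor
      · intro h
        by_contra hj
        push_neg at hj
        have h1 : m*p ≤ m*j := hmul _ _ (by omega)
        omega
      · intro hj
        have h1 : m*(j+1) ≤ m*p := hmul _ _ (by omega)
        have h2 : m*(j+1) = m*j + m := by ring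
        omega
  rw [card_fiber_decomp _ n m hm
    (fun s hs => by
      rw [Finset.mem_filter, Finset.mem_range] at hs
      exact hs.1) _ hL]
  refine Finset.sum_congr rfl fun c hc => ?_
  rw [mem_range] at hc
  congr 1
  refine Finset.filter_congr fun j hj => ?_
  rw [mem_range] at hj
  have hlt : c + m*j < n := (hL c hc j).2 hj
  rw [Finset.mem_filter, Finset.mem_range]
  rw [codeN_iff cond m n c j hm hc]
  constructor
  · rintro ⟨-, -, h⟩
    exact h
  · intro h
    exact ⟨hlt, hlt, h⟩

lemma count_E (r p q : ℕ) (hr : 1 ≤ r) (hp : 1 ≤ p) (hpE : p % 2 = 0) (hq1 : r+2 ≤ q)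
    (hq2 : q ≤ 2*r) [DecidablePred (codeN (condE r p q) (2*r+1) ((2*r+1)*p+q))] :
    ((range ((2*r+1)*p+q)).filter (codeN (condE r p q) (2*r+1) ((2*r+1)*p+q))).card
      = (2*r+1)*p/2 + q - 1 := by
  classical
  rw [count_code (condE r p q) p q (2*r+1) ((2*r+1)*p+q) (by omega) (by omega) rfl]
  rw [← sum_Bfun_even r p q hr hp hq1 hq2 hpE]
  refine Finset.sum_congr rfl fun c hc => ?_
  rw [mem_range] at hc
  by_cases h1 : c + r + 2 ≤ q
  · rw [if_pos (show c < q by omega)]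
    rw [Finset.filter_congr (fun j (hj : j ∈ range (p+1)) =>
      (show condE r p q c j ↔ j % 2 = 0 by unfold condE; omega))]
    rw [card_evens]
    unfold Bfun
    split_ifs <;> omega
  · by_cases h2 : c ≤ r
    · rw [if_pos (show c < q by omega)]
      rw [Finset.filter_congr (fun j (hj : j ∈ range (p+1)) =>
        (show condE r p q c j ↔ j % 2 = 1 by unfold condE; omega))]
      rw [card_odds]
      unfold Bfun
      split_ifs <;> omega
    · by_cases h3 : c < q
      · rw [if_pos h3]
        rw [Finset.filter_congr (fun j (hj : j ∈ range (p+1)) =>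
          (show condE r p q c j ↔ j % 2 = 0 by unfold condE; omega))]
        rw [card_evens]
        unfold Bfun
        split_ifs <;> omega
      · rw [if_neg h3]
        have he : (range p).filter (fun j => condE r p q c j)
            = insert (p-1) ((range p).filter (fun j => j % 2 = 0)) := by
          ext j
          simp only [Finset.mem_filter, Finset.mem_insert, Finset.mem_range]
          unfold condE
          omega
        rw [he, card_insert_of_notMem (by
          simp only [Finset.mem_filter, Finset.mem_range]
          omega)]
        rw [card_evens]
        unfold Bfun
        split_ifs <;> omega

lemma count_O (r p q : ℕ) (hr : 1 ≤ r) (hp : 1 ≤ p) (hpO : p % 2 = 1) (hq1 : r+2 ≤ q)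
    (hq2 : q ≤ 2*r) [DecidablePred (codeN (condO r q) (2*r+1) ((2*r+1)*p+q))] :
    ((range ((2*r+1)*p+q)).filter (codeN (condO r q) (2*r+1) ((2*r+1)*p+q))).card
      = (2*r+1)*(p-1)/2 + 2*r + 1 := by
  classical
  rw [count_code (condO r q) p q (2*r+1) ((2*r+1)*p+q) (by omega) (by omega) rfl]
  rw [← sum_Bfun_odd r p q hr hp hq1 hq2 hpO]
  refine Finset.sum_congr rfl fun c hc => ?_
  rw [mem_range] at hc
  by_cases h1 : c + r + 2 ≤ q ∨ c = r
  · rw [if_pos (show c < q by omega)]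
    rw [Finset.filter_congr (fun j (hj : j ∈ range (p+1)) =>
      (show condO r q c j ↔ j % 2 = 1 by unfold condO; omega))]
    rw [card_odds]
    unfold Bfun
    split_ifs <;> omega
  · by_cases h2 : c < q
    · rw [if_pos h2]
      rw [Finset.filter_congr (fun j (hj : j ∈ range (p+1)) =>
        (show condO r q c j ↔ j % 2 = 0 by unfold condO; omega))]
      rw [card_evens]
      unfold Bfun
      split_ifs <;> omega
    · rw [if_neg h2]
      rw [Finset.filter_congr (fun j (hj : j ∈ range p) =>
        (show condO r q c j ↔ j % 2 = 0 by unfold condO; omega))]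
      rw [card_evens]
      unfold Bfun
      split_ifs <;> omega

lemma upper_even (r p q : ℕ) (hr : 1 ≤ r) (hp : 1 ≤ p) (hq1 : r+2 ≤ q) (hq2 : q ≤ 2*r)
    (hpE : p % 2 = 0) :
    ∃ D : Set (Fin ((2*r+1)*p + q)), IsIdCode (SimpleGraph.pathGraph ((2*r+1)*p + q)) r D ∧
      D.ncard = (2*r+1)*p/2 + q - 1 := by
  classical
  refine ⟨{x | codeN (condE r p q) (2*r+1) ((2*r+1)*p+q) x.val}, ?_, ?_⟩
  · apply idcode_of
    · have ha : codeN (condE r p q) (2*r+1) ((2*r+1)*p+q) 0 := by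
        have hq0 : 0 < (2*r+1)*p+q := by
          have : (2*r+1)*1 ≤ (2*r+1)*p := Nat.mul_le_mul_left _ hp
          omega
        exact ⟨0, 0, by omega, by omega, hq0, by unfold condE; omega⟩
      have hdom := dominate ((2*r+1)*p+q) r (codeN (condE r p q) (2*r+1) ((2*r+1)*p+q)) 0
        ha (by omega) (succE r p q (2*r+1) ((2*r+1)*p+q) hr hp hpE hq1 hq2 rfl rfl)
      intro x
      obtain ⟨d, hd, h1, h2⟩ := hdom x.val x.isLt
      exact ⟨⟨d, codeN_lt hd⟩, hd, h1, h2⟩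
    · intro i hi
      rcases natB_E r p q (2*r+1) ((2*r+1)*p+q) hr hp hpE hq1 hq2 rfl rfl i hi with
        ⟨h1, h2⟩ | ⟨h1, h2⟩
      · exact Or.inl ⟨h1, ⟨i-r, codeN_lt h2⟩, h2, rfl⟩
      · exact Or.inr ⟨h1, ⟨i+r+1, codeN_lt h2⟩, h2, rfl⟩
  · rw [ncard_setOf_val]
    exact count_E r p q hr hp hpE hq1 hq2

lemma upper_odd (r p q : ℕ) (hr : 1 ≤ r) (hp : 1 ≤ p) (hq1 : r+2 ≤ q) (hq2 : q ≤ 2*r)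
    (hpO : p % 2 = 1) :
    ∃ D : Set (Fin ((2*r+1)*p + q)), IsIdCode (SimpleGraph.pathGraph ((2*r+1)*p + q)) r D ∧
      D.ncard = (2*r+1)*(p-1)/2 + 2*r + 1 := by
  classical
  refine ⟨{x | codeN (condO r q) (2*r+1) ((2*r+1)*p+q) x.val}, ?_, ?_⟩
  · apply idcode_of
    · have ha : codeN (condO r q) (2*r+1) ((2*r+1)*p+q) (q-r-1) := by
        have hq0 : (2*r+1)*1 ≤ (2*r+1)*p := Nat.mul_le_mul_left _ hp
        exact ⟨q-r-1, 0, by omega, by omega, by omega, by unfold condO; omega⟩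
      have hdom := dominate ((2*r+1)*p+q) r (codeN (condO r q) (2*r+1) ((2*r+1)*p+q)) (q-r-1)
        ha (by omega) (succO r p q (2*r+1) ((2*r+1)*p+q) hr hp hpO hq1 hq2 rfl rfl)
      intro x
      obtain ⟨d, hd, h1, h2⟩ := hdom x.val x.isLt
      exact ⟨⟨d, codeN_lt hd⟩, hd, h1, h2⟩
    · intro i hi
      rcases natB_O r p q (2*r+1) ((2*r+1)*p+q) hr hp hpO hq1 hq2 rfl rfl i hi with
        ⟨h1, h2⟩ | ⟨h1, h2⟩
      · exact Or.inl ⟨h1, ⟨i-r, codeN_lt h2⟩, h2, rfl⟩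
      · exact Or.inr ⟨h1, ⟨i+r+1, codeN_lt h2⟩, h2, rfl⟩
  · rw [ncard_setOf_val]
    exact count_O r p q hr hp hpO hq1 hq2

lemma lower_glue (r p q : ℕ) (hr : 1 ≤ r) (hp : 1 ≤ p) (hq1 : r+2 ≤ q) (hq2 : q ≤ 2*r)
    (D : Set (Fin ((2*r+1)*p + q))) (hid : IsIdCode (SimpleGraph.pathGraph ((2*r+1)*p + q)) r D) :
    (Even p → (2*r+1)*p/2 + q - 1 ≤ D.ncard) ∧
      (Odd p → (2*r+1)*(p-1)/2 + 2*r + 1 ≤ D.ncard) := by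
  classical
  have hfin : D.Finite := Set.toFinite D
  set S : Finset ℕ := hfin.toFinset.image Fin.val with hSdef
  have hmem : ∀ k, k ∈ S ↔ memS D k := by
    intro k
    simp only [hSdef, Finset.mem_image, Set.Finite.mem_toFinset]
    rfl
  have hS : ∀ s ∈ S, s < (2*r+1)*p + q := by
    intro s hs
    rw [hmem] at hs
    obtain ⟨x, _, rfl⟩ := hs
    exact x.isLt
  have hcard : D.ncard = S.card := by
    rw [Set.ncard_eq_toFinset_card D hfin, hSdef,
      Finset.card_image_of_injective _ Fin.val_injective]
  have hB : ∀ i, i+1 < (2*r+1)*p+q →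
      (r ≤ i ∧ (i-r) ∈ S) ∨ (i+r+1 < (2*r+1)*p+q ∧ (i+r+1) ∈ S) := by
    intro i hi
    rcases idcode_natB hid i hi with ⟨h1, h2⟩ | ⟨h1, h2⟩
    · exact Or.inl ⟨h1, (hmem _).2 h2⟩
    · exact Or.inr ⟨h1, (hmem _).2 h2⟩
  have := lower_bound r p q hr hp hq1 hq2 S hS hB
  exact ⟨fun h => hcard ▸ (this.1 h), fun h => hcard ▸ (this.2 h)⟩

theorem stmt14 (r p q : ℕ) (hr : 1 ≤ r) (hp : 1 ≤ p) (hq1 : r+2 ≤ q) (hq2 : q ≤ 2*r) :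
    (Even p → IsLeast {m | ∃ D : Set (Fin ((2*r+1)*p + q)),
        IsIdCode (SimpleGraph.pathGraph ((2*r+1)*p + q)) r D ∧ D.ncard = m}
      ((2*r+1)*p/2 + q - 1)) ∧
    (Odd p → IsLeast {m | ∃ D : Set (Fin ((2*r+1)*p + q)),
        IsIdCode (SimpleGraph.pathGraph ((2*r+1)*p + q)) r D ∧ D.ncard = m}
      ((2*r+1)*(p-1)/2 + 2*r + 1)) := by
  constructor
  · intro hEven
    constructor
    · obtain ⟨D, hid, hcard⟩ := upper_even r p q hr hp hq1 hq2 (Nat.even_iff.1 hEven)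
      exact ⟨D, hid, hcard⟩
    · rintro mm ⟨D, hid, rfl⟩
      exact (lower_glue r p q hr hp hq1 hq2 D hid).1 hEven
  · intro hOdd
    constructor
    · obtain ⟨D, hid, hcard⟩ := upper_odd r p q hr hp hq1 hq2 (Nat.odd_iff.1 hOdd)
      exact ⟨D, hid, hcard⟩
    · rintro mm ⟨D, hid, rfl⟩
      exact (lower_glue r p q hr hp hq1 hq2 D hid).2 hOdd
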